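/- Let λ > 0 and k ≥ 1, and let Y be a truncated-at-k Poisson(λ) random variable, i.e. P(Y = t) = λ^t/(t! f_k(λ)) for t ≥ k, where f_k(λ) = e^λ − Σ_{i=0}^{k−1} λ^i/i!. Then for every integer i ≥ 0, P(Y ≥ 2(λ+k) + i) ≤ 2^{−i}. -/

import Mathlib

/-- `fTrunc k λ = e^λ - ∑_{i<k} λ^i/i!`, the normalizer of the truncated Poisson. -/
noncomputable def fTrunc (k : ℕ) (lam : ℝ) : ℝ :=
  Real.exp lam - ∑ i ∈ Finset.range k, lam ^ i / (Nat.factorial i)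

lemma exp_eq_tsum' (lam : ℝ) : Real.exp lam = ∑' n : ℕ, lam ^ n / n.factorial := by
  rw [Real.exp_eq_exp_ℝ, NormedSpace.exp_eq_tsum_div]

lemma fTrunc_eq_tail (k : ℕ) (lam : ℝ) :
    fTrunc k lam = ∑' j : ℕ, lam ^ (j + k) / (j + k).factorial := by
  have h := Summable.sum_add_tsum_nat_add (f := fun n : ℕ => lam ^ n / (n.factorial : ℝ)) k
    (Real.summable_pow_div_factorial lam)
  rw [fTrunc, exp_eq_tsum', ← h]
  ring

lemma chain (lam : ℝ) (hlam : 0 < lam) (m : ℕ) (hm : 2 * lam ≤ m) (j : ℕ) :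
    lam ^ (m + j) / (m + j).factorial ≤ lam ^ m / m.factorial * (1 / 2) ^ j := by
  induction j with
  | zero => simp
  | succ j ih =>
    have hpos : (0 : ℝ) < ((m + j + 1 : ℕ) : ℝ) := by positivity
    have hfpos : (0 : ℝ) < ((m + j).factorial : ℝ) := by positivity
    have hfac : ((m + j + 1).factorial : ℝ) = ((m + j + 1 : ℕ) : ℝ) * (m + j).factorial := by
      rw [show m + j + 1 = (m + j) + 1 from rfl, Nat.factorial_succ]; push_cast; ring
    have key : lam ^ (m + (j + 1)) / (m + (j + 1)).factorial
        = (lam ^ (m + j) / (m + j).factorial) * (lam / ((m + j + 1 : ℕ) : ℝ)) := by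
      rw [show m + (j + 1) = m + j + 1 from rfl, pow_succ, hfac]
      field_simp
    rw [key]
    have hhalf : lam / ((m + j + 1 : ℕ) : ℝ) ≤ 1 / 2 := by
      rw [div_le_div_iff₀ hpos (by norm_num)]
      push_cast
      linarith [Nat.cast_nonneg (α := ℝ) j]
    calc (lam ^ (m + j) / (m + j).factorial) * (lam / ((m + j + 1 : ℕ) : ℝ))
        ≤ (lam ^ m / m.factorial * (1 / 2) ^ j) * (1 / 2) := by
          apply mul_le_mul ih hhalf (by positivity) (by positivity)
      _ = lam ^ m / m.factorial * (1 / 2) ^ (j + 1) := by ring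

set_option maxHeartbeats 1600000 in
private lemma stmt5_aux (k : ℕ) (hk : 1 ≤ k) (lam : ℝ) (hlam : 0 < lam) (i : ℕ) :
    (∑' t : ℕ, if k ≤ t ∧ 2 * (lam + k) + i ≤ (t : ℝ) then
        lam ^ t / (Nat.factorial t * fTrunc k lam) else 0)
      ≤ (1 / 2 : ℝ) ^ i := by
  set N : ℕ := ⌈2 * (lam + k) + i⌉₊ with hN
  have hk1 : (1 : ℝ) ≤ (k : ℝ) := by exact_mod_cast hk
  have hNval : 2 * (lam + k) + i ≤ (N : ℝ) := Nat.le_ceil _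
  have hNi : i + 3 ≤ N := by
    have h1 : ((i : ℝ) + 2) < (N : ℝ) := by linarith
    have h2 : (i + 2 : ℕ) < N := by exact_mod_cast (by push_cast; linarith : ((i + 2 : ℕ) : ℝ) < (N : ℝ))
    omega
  set m : ℕ := N - i with hm
  have hNm : N = m + i := by omega
  have hmR : (m : ℝ) = (N : ℝ) - i := by
    have hiN : i ≤ N := by omega
    push_cast [hm, hiN]; ring
  have hm2lam : 2 * lam ≤ (m : ℝ) := by rw [hmR]; linarith
  have hmk : k + 1 ≤ m := by
    have h1 : (k : ℝ) + 1 < (m : ℝ) := by rw [hmR]; linarith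
    have h2 : (k + 1 : ℕ) < m := by exact_mod_cast (by push_cast; linarith : ((k + 1 : ℕ) : ℝ) < (m : ℝ))
    omega
  set p : ℕ := m - 1 with hp
  have hmsub : m = p + 1 := by omega
  have hkp : k ≤ p := by omega
  have hterm : ∀ j : ℕ, (0:ℝ) ≤ lam ^ (j + k) / (j + k).factorial := by
    intro j; positivity
  have htail_summable : Summable (fun j : ℕ => lam ^ (j + k) / ((j + k).factorial : ℝ)) :=
    ((summable_nat_add_iff k).mpr (Real.summable_pow_div_factorial lam))
  have hsingle : lam ^ p / ((p.factorial : ℝ)) ≤ fTrunc k lam := by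
    rw [fTrunc_eq_tail]
    have h := Summable.le_tsum htail_summable (p - k) (fun j _ => hterm j)
    have heq : p - k + k = p := by omega
    rwa [heq] at h
  have hmpos : (0:ℝ) < (m : ℝ) := by linarith
  have hfppos : (0:ℝ) < ((p.factorial : ℝ)) := by positivity
  have hmfac : (m.factorial : ℝ) = (m : ℝ) * ((p.factorial : ℝ)) := by
    rw [hmsub, Nat.factorial_succ]; push_cast; ring
  have hdouble : 2 * (lam ^ m / (m.factorial : ℝ)) ≤ lam ^ p / ((p.factorial : ℝ)) := by
    have h1 : lam ^ m / (m.factorial : ℝ) = lam ^ p / (p.factorial : ℝ) * (lam / (m : ℝ)) := by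
      have hpow : lam ^ m = lam ^ p * lam := by rw [hmsub]; ring
      rw [hmfac, hpow]
      field_simp
    rw [h1]
    have h2 : lam / (m : ℝ) ≤ 1 / 2 := by
      rw [div_le_div_iff₀ hmpos (by norm_num)]; linarith
    have h3 : (0:ℝ) ≤ lam ^ p / (p.factorial : ℝ) := by positivity
    nlinarith
  have hF2 : 2 * (lam ^ m / (m.factorial : ℝ)) ≤ fTrunc k lam := le_trans hdouble hsingle
  have hFpos : 0 < fTrunc k lam := lt_of_lt_of_le (by positivity) hF2
  have hcond : ∀ t : ℕ, (k ≤ t ∧ 2 * (lam + k) + i ≤ (t : ℝ)) ↔ N ≤ t := by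
    intro t
    constructor
    · rintro ⟨_, h⟩; exact Nat.ceil_le.mpr h
    · intro h
      have h2 : 2 * (lam + k) + i ≤ (t : ℝ) := le_trans hNval (by exact_mod_cast h)
      refine ⟨?_, h2⟩
      have : (k : ℝ) ≤ (t : ℝ) := by linarith [Nat.cast_nonneg (α := ℝ) i]
      exact_mod_cast this
  have hrw : (∑' t : ℕ, if k ≤ t ∧ 2 * (lam + k) + i ≤ (t : ℝ) then
        lam ^ t / (Nat.factorial t * fTrunc k lam) else 0)
      = (∑' t : ℕ, if N ≤ t then lam ^ t / (t.factorial : ℝ) else 0) / fTrunc k lam := by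
    rw [← tsum_div_const]
    apply tsum_congr
    intro t
    rw [if_congr (hcond t) rfl rfl]
    split
    · rw [div_div]
    · simp
  rw [hrw]
  have hfsummable : Summable (fun t : ℕ => if N ≤ t then lam ^ t / (t.factorial : ℝ) else 0) := by
    apply Summable.of_nonneg_of_le (fun t => by positivity)
      (fun t => ?_) (Real.summable_pow_div_factorial lam)
    split
    · exact le_refl _
    · positivity
  have htail : (∑' t : ℕ, if N ≤ t then lam ^ t / (t.factorial : ℝ) else 0)
      = ∑' j : ℕ, lam ^ (j + N) / ((j + N).factorial : ℝ) := by
    rw [← Summable.sum_add_tsum_nat_add N hfsummable]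
    have h1 : ∑ t ∈ Finset.range N, (if N ≤ t then lam ^ t / (t.factorial : ℝ) else 0) = 0 := by
      apply Finset.sum_eq_zero
      intro t ht
      simp only [Finset.mem_range] at ht
      rw [if_neg (by omega)]
    rw [h1, zero_add]
    apply tsum_congr
    intro j
    rw [if_pos (by omega)]
  rw [htail]
  have hshift : Summable (fun j : ℕ => lam ^ (j + N) / ((j + N).factorial : ℝ)) :=
    (summable_nat_add_iff N).mpr (Real.summable_pow_div_factorial lam)
  have hgeom : Summable (fun j : ℕ => lam ^ N / (N.factorial : ℝ) * (1 / 2 : ℝ) ^ j) :=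
    (summable_geometric_of_lt_one (by norm_num) (by norm_num)).mul_left _
  have hbound : (∑' j : ℕ, lam ^ (j + N) / ((j + N).factorial : ℝ))
      ≤ ∑' j : ℕ, lam ^ N / (N.factorial : ℝ) * (1 / 2 : ℝ) ^ j := by
    have hN2lam : 2 * lam ≤ (N : ℝ) := by
      have hk0 : (0:ℝ) ≤ (k : ℝ) := Nat.cast_nonneg k
      have hi0 : (0:ℝ) ≤ (i : ℝ) := Nat.cast_nonneg i
      linarith
    apply Summable.tsum_le_tsum _ hshift hgeom
    intro j
    have h := chain lam hlam N hN2lam j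
    rwa [Nat.add_comm j N]
  have hgeomval : (∑' j : ℕ, lam ^ N / (N.factorial : ℝ) * (1 / 2 : ℝ) ^ j)
      = lam ^ N / (N.factorial : ℝ) * 2 := by
    rw [tsum_mul_left, tsum_geometric_of_lt_one (by norm_num) (by norm_num)]
    norm_num
  have hNbound : lam ^ N / (N.factorial : ℝ) ≤ lam ^ m / (m.factorial : ℝ) * (1 / 2 : ℝ) ^ i := by
    have h := chain lam hlam m hm2lam i
    rwa [← hNm] at h
  rw [div_le_iff₀ hFpos]
  have hpowpos : (0:ℝ) < (1 / 2 : ℝ) ^ i := by positivity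
  calc (∑' j : ℕ, lam ^ (j + N) / ((j + N).factorial : ℝ))
      ≤ lam ^ N / (N.factorial : ℝ) * 2 := by rw [← hgeomval]; exact hbound
    _ ≤ (lam ^ m / (m.factorial : ℝ) * (1 / 2 : ℝ) ^ i) * 2 := by nlinarith
    _ = (1 / 2 : ℝ) ^ i * (2 * (lam ^ m / (m.factorial : ℝ))) := by ring
    _ ≤ (1 / 2 : ℝ) ^ i * fTrunc k lam := by
        exact mul_le_mul_of_nonneg_left hF2 (le_of_lt hpowpos)

/-- for a truncated-at-`k` Poisson(`λ`) variable `Y`,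
`P(Y ≥ 2(λ+k)+i) ≤ 2^{-i}` for every `i ≥ 0`. -/
theorem stmt5 (k : ℕ) (hk : 1 ≤ k) (lam : ℝ) (hlam : 0 < lam) (i : ℕ) :
    (∑' t : ℕ, if k ≤ t ∧ 2 * (lam + k) + i ≤ (t : ℝ) then
        lam ^ t / (Nat.factorial t * fTrunc k lam) else 0)
      ≤ (1 / 2 : ℝ) ^ i :=
  stmt5_aux k hk lam hlam i
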